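/- Let G = (V, E) be a strongly connected digraph containing at least one cycle, let p be its period, and let c be a vertex of G. Then there exists N such that for every integer i ≥ N, G contains a cycle of length i·p passing through c. -/

import Mathlib

variable {V : Type*}

/-- There is a path (walk) of length `n` from `u` to `v` in the digraph with
edge relation `E`: a sequence `u = f 0, f 1, …, f n = v` of vertices with
`(f i, f (i+1))` an edge for all `i < n`. Vertices and edges may repeat. -/
def IsPathOfLength (E : V → V → Prop) (u v : V) (n : ℕ) : Prop :=
  ∃ f : ℕ → V, f 0 = u ∧ f n = v ∧ ∀ i < n, E (f i) (f (i + 1))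

/-- There is a `(u,v)`-path (of some length). -/
def HasPath (E : V → V → Prop) (u v : V) : Prop :=
  ∃ n, IsPathOfLength E u v n

/-- A digraph is strongly connected if there is a path between every pair of vertices. -/
def StronglyConnected (E : V → V → Prop) : Prop :=
  ∀ u v, HasPath E u v

/-- The set of lengths of cycles (paths of positive length from a vertex to itself). -/
def cycleLengths (E : V → V → Prop) : Set ℕ :=
  {n | 0 < n ∧ ∃ v, IsPathOfLength E v v n}

/-- A digraph is acyclic if it has no cycle. -/
def Acyclic (E : V → V → Prop) : Prop :=
  ∀ (v : V) (n : ℕ), 0 < n → ¬ IsPathOfLength E v v n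

/-- `p` is the greatest common divisor of the set `S` of natural numbers:
`p` divides every element of `S`, and every common divisor of `S` divides `p`. -/
def IsSetGcd (S : Set ℕ) (p : ℕ) : Prop :=
  (∀ n ∈ S, p ∣ n) ∧ ∀ q : ℕ, (∀ n ∈ S, q ∣ n) → q ∣ p

/-- `u` and `v` are in the same strongly connected component. -/
def SameSCC (E : V → V → Prop) (u v : V) : Prop :=
  HasPath E u v ∧ HasPath E v u

/-- The set of lengths of cycles contained in the strongly connected component of `c`. -/
def compCycleLengths (E : V → V → Prop) (c : V) : Set ℕ :=
  {n | 0 < n ∧ ∃ v, SameSCC E v c ∧ IsPathOfLength E v v n}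

/-- `P` is the period of the digraph `E`: the least common multiple of the periods
(gcds of cycle lengths) of the strongly connected components containing at least one
cycle. Characterised by divisibility: every such component period divides `P`, and `P`
divides every common multiple of the component periods. -/
def IsDigraphPeriod (E : V → V → Prop) (P : ℕ) : Prop :=
  (∀ (c : V) (p : ℕ), (compCycleLengths E c).Nonempty →
      IsSetGcd (compCycleLengths E c) p → p ∣ P) ∧
  ∀ Q : ℕ, (∀ (c : V) (p : ℕ), (compCycleLengths E c).Nonempty →
      IsSetGcd (compCycleLengths E c) p → p ∣ Q) → P ∣ Q

/-- There is a path of length `n` from `u` to `v` passing through the vertex `c`. -/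
def IsPathThruOfLength (E : V → V → Prop) (u v c : V) (n : ℕ) : Prop :=
  ∃ f : ℕ → V, f 0 = u ∧ f n = v ∧ (∀ i < n, E (f i) (f (i + 1))) ∧ ∃ m ≤ n, f m = c

/-- Adjacency in the undirected graph `G'_k`: vertices `(u, i)` and `(v, j)` of
`V × ZMod k` are adjacent iff `(u,v) ∈ E` and `j = i + 1 (mod k)` (in either direction). -/
def GkAdj (E : V → V → Prop) (k : ℕ) (a b : V × ZMod k) : Prop :=
  (E a.1 b.1 ∧ b.2 = a.2 + 1) ∨ (E b.1 a.1 ∧ a.2 = b.2 + 1)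

/-- Two vertices of `G'_k` are joined by an (undirected) path. -/
def GkConn (E : V → V → Prop) (k : ℕ) : V × ZMod k → V × ZMod k → Prop :=
  Relation.ReflTransGen (GkAdj E k)

lemma path_comp {E : V → V → Prop} {u v w : V} {m n : ℕ}
    (h1 : IsPathOfLength E u v m) (h2 : IsPathOfLength E v w n) :
    IsPathOfLength E u w (m + n) := by
  obtain ⟨f, hf0, hfm, hf⟩ := h1
  obtain ⟨g, hg0, hgn, hg⟩ := h2
  refine ⟨fun i => if i ≤ m then f i else g (i - m), ?_, ?_, ?_⟩
  · simp [hf0]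
  · by_cases h : m + n ≤ m
    · have hn : n = 0 := by omega
      simp only [h, if_pos]
      rw [show m + n = m from by omega, hfm, ← hgn, hn, ← hg0]
    · show (if m + n ≤ m then f (m + n) else g (m + n - m)) = w
      rw [if_neg h, show m + n - m = n from by omega, hgn]
  · intro i hi
    by_cases h1' : i + 1 ≤ m
    · have h2' : i ≤ m := by omega
      simp only [h1', h2', if_pos]
      exact hf i (by omega)
    · by_cases h2' : i ≤ m
      · have him : i = m := by omega
        simp only [h1', h2', if_pos, if_neg]
        subst him
        rw [hfm, show i + 1 - i = 1 from by omega, ← hg0]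
        exact hg 0 (by omega)
      · simp only [h1', h2', if_neg]
        rw [show i + 1 - m = (i - m) + 1 from by omega]
        exact hg (i - m) (by omega)

lemma closure_rep {A : Set ℕ} (h0 : 0 ∈ A) (hadd : ∀ a ∈ A, ∀ b ∈ A, a + b ∈ A) :
    ∀ x ∈ AddSubgroup.closure ((↑) '' A : Set ℤ),
      ∃ u ∈ A, ∃ w ∈ A, (u : ℤ) - w = x := by
  intro x hx
  induction hx using AddSubgroup.closure_induction with
  | mem y hy =>
      obtain ⟨a, ha, rfl⟩ := hy
      exact ⟨a, ha, 0, h0, by simp⟩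
  | zero => exact ⟨0, h0, 0, h0, by simp⟩
  | add y z _ _ hy hz =>
      obtain ⟨u1, hu1, w1, hw1, h1⟩ := hy
      obtain ⟨u2, hu2, w2, hw2, h2⟩ := hz
      exact ⟨u1 + u2, hadd _ hu1 _ hu2, w1 + w2, hadd _ hw1 _ hw2, by push_cast; linarith⟩
  | neg y _ hy =>
      obtain ⟨u1, hu1, w1, hw1, h1⟩ := hy
      exact ⟨w1, hw1, u1, hu1, by linarith⟩

/-- In a strongly connected digraph with at least one cycle and period `p`,
for every vertex `c` and all large enough `i` there is a cycle of length `i·p` through `c`. -/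
theorem eventually_cycle_through_vertex (E : V → V → Prop)
    (hsc : StronglyConnected E) (hcyc : (cycleLengths E).Nonempty)
    (p : ℕ) (hp : IsSetGcd (cycleLengths E) p) (c : V) :
    ∃ N : ℕ, ∀ i ≥ N, 0 < i * p ∧ IsPathOfLength E c c (i * p) := by
  classical
  obtain ⟨n0, hn0pos, v0, hv0⟩ := hcyc
  have hppos : 0 < p := by
    rcases Nat.eq_zero_or_pos p with h | h
    · exfalso
      have := hp.1 n0 ⟨hn0pos, v0, hv0⟩
      subst h
      simp at this
      omega
    · exact h
  set A : Set ℕ := {n | IsPathOfLength E c c n} with hA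
  have h0A : 0 ∈ A := ⟨fun _ => c, rfl, rfl, fun i hi => absurd hi (by omega)⟩
  have haddA : ∀ a ∈ A, ∀ b ∈ A, a + b ∈ A := fun a ha b hb => path_comp ha hb
  have hmulA : ∀ (k a : ℕ), a ∈ A → k * a ∈ A := by
    intro k
    induction k with
    | zero => intro a _; simpa using h0A
    | succ k ih =>
        intro a ha
        have := haddA a ha (k * a) (ih a ha)
        rw [show (k + 1) * a = a + k * a from by ring]
        exact this
  have hembed : ∀ n ∈ cycleLengths E, ∃ m ∈ A, m + n ∈ A := by
    intro n hn
    obtain ⟨hnpos, v, hv⟩ := hn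
    obtain ⟨a, ha⟩ := hsc c v
    obtain ⟨b, hb⟩ := hsc v c
    refine ⟨a + b, path_comp ha hb, ?_⟩
    have h2 : IsPathOfLength E c c (a + (n + b)) := path_comp ha (path_comp hv hb)
    rw [show a + b + n = a + (n + b) from by ring]
    exact h2
  have hpA : ∀ m ∈ A, p ∣ m := by
    intro m hm
    rcases Nat.eq_zero_or_pos m with h | h
    · simp [h]
    · exact hp.1 m ⟨h, c, hm⟩
  set T := AddSubgroup.closure ((↑) '' A : Set ℤ) with hT
  obtain ⟨g, hg⟩ := Int.subgroup_cyclic T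
  have hgdvd : ∀ m ∈ A, (g : ℤ) ∣ (m : ℤ) := by
    intro m hm
    have hmT : (m : ℤ) ∈ T := AddSubgroup.subset_closure ⟨m, hm, rfl⟩
    rw [hg, AddSubgroup.mem_closure_singleton] at hmT
    obtain ⟨k, hk⟩ := hmT
    exact ⟨k, by rw [← hk]; simp [zsmul_eq_mul, Int.cast_id, mul_comm]⟩
  have h1 : ∀ n ∈ cycleLengths E, g.natAbs ∣ n := by
    intro n hn
    obtain ⟨m, hm, hmn⟩ := hembed n hn
    have d1 := hgdvd m hm
    have d2 := hgdvd (m + n) hmn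
    have hd : (g : ℤ) ∣ (n : ℤ) := by
      have := dvd_sub d2 d1
      push_cast at this ⊢
      simpa using this
    have := Int.natAbs_dvd_natAbs.mpr hd
    simpa using this
  have hgp : g.natAbs ∣ p := hp.2 _ h1
  have hgT : g ∈ T := by
    rw [hg]
    exact AddSubgroup.subset_closure rfl
  have hpg : (p : ℤ) ∣ g := by
    obtain ⟨u, hu, w, hw, huw⟩ := closure_rep h0A haddA g hgT
    rw [← huw]
    exact dvd_sub (Int.natCast_dvd_natCast.mpr (hpA u hu)) (Int.natCast_dvd_natCast.mpr (hpA w hw))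
  have hpeq : g.natAbs = p := by
    refine Nat.dvd_antisymm hgp ?_
    have := Int.natAbs_dvd_natAbs.mpr hpg
    simpa using this
  have hpT : (p : ℤ) ∈ T := by
    rcases Int.natAbs_eq g with h | h
    · rw [← hpeq, ← h]; exact hgT
    · rw [← hpeq]
      have : ((g.natAbs : ℤ)) = -g := by omega
      rw [this]
      exact neg_mem hgT
  obtain ⟨u, hu, w, hw, huw⟩ := closure_rep h0A haddA _ hpT
  have huwp : u = w + p := by omega
  obtain ⟨s, hs⟩ := hpA w hw
  by_cases hs0 : s = 0
  · refine ⟨1, fun i hi => ?_⟩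
    have hw0 : w = 0 := by rw [hs0, Nat.mul_zero] at hs; exact hs
    have hpAmem : p ∈ A := by
      have : u = p := by omega
      rw [← this]; exact hu
    refine ⟨Nat.mul_pos (by omega) hppos, ?_⟩
    have := hmulA i p hpAmem
    exact this
  · refine ⟨s * s + 1, fun i hi => ?_⟩
    refine ⟨Nat.mul_pos (by omega) hppos, ?_⟩
    set K := i / s with hK
    set j := i % s with hj
    have hslt : j < s := Nat.mod_lt _ (by omega)
    have hsK : s ≤ K := by
      rw [hK, Nat.le_div_iff_mul_le (by omega)]
      omega
    have hjK : j ≤ K := by omega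
    obtain ⟨m, hm⟩ := Nat.exists_eq_add_of_le hjK
    have hieq : i = s * K + j := (Nat.div_add_mod i s).symm
    have key : i * p = m * w + j * u := by
      rw [huwp, hs, hieq, hm]
      ring
    rw [key]
    exact haddA _ (hmulA m w hw) _ (hmulA j u hu)
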